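/- Let X be an additive commutative monoid, Y an additive commutative group with a partial order compatible with addition, and p a prime. If f : X → Y is subadditive and satisfies f(p • x) = p • f(x) for every x ∈ X, then f is convex; moreover f is ℕ-sublinear, i.e., f(m • x) = m • f(x) for every m ∈ ℕ and every x ∈ X. -/

import Mathlib

/-- A function between additive commutative monoids, whose codomain carries a partial order,
is convex. -/
def ConvexFn {X Y : Type*} [AddCommMonoid X] [AddCommMonoid Y] [PartialOrder Y]
    (f : X → Y) : Prop :=
  ∀ (n : ℕ), 0 < n → ∀ m : Fin n → ℕ, (∀ i, 0 < m i) →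
    ∀ (xs : Fin n → X) (x : X), (∑ i, m i) • x = ∑ i, m i • xs i →
      (∑ i, m i) • f x ≤ ∑ i, m i • f (xs i)

/-- A subadditive function satisfying `f(p • x) = p • f(x)` for a prime `p` is convex,
and moreover ℕ-sublinear: `f(m • x) = m • f(x)` for all `m ∈ ℕ`. -/
theorem convexFn_of_subadditive_p_homogeneous {X Y : Type*} [AddCommMonoid X] [AddCommGroup Y]
    [PartialOrder Y] [CovariantClass Y Y (· + ·) (· ≤ ·)]
    (p : ℕ) (hp : p.Prime) (f : X → Y)
    (hsub : ∀ x y, f (x + y) ≤ f x + f y)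
    (hhom : ∀ x, f (p • x) = p • f x) :
    ConvexFn f ∧ ∀ (m : ℕ) (x : X), f (m • x) = m • f x := by
  have hp2 : 2 ≤ p := hp.two_le
  -- nsmul_nonneg
  have hnn : ∀ (y : Y), 0 ≤ y → ∀ n : ℕ, 0 ≤ n • y := by
    intro y hy n
    induction n with
    | zero => simp
    | succ k ih =>
      rw [succ_nsmul]
      calc (0 : Y) = 0 + 0 := by simp
      _ ≤ k • y + y := add_le_add ih hy
  -- f 0 = 0
  have hf0 : f 0 = 0 := by
    have h1 : f 0 ≤ f 0 + f 0 := by simpa using hsub 0 0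
    have h0 : (0 : Y) ≤ f 0 := by
      have := add_le_add_left h1 (-(f 0))
      simpa [add_assoc] using this
    have h2 : f 0 = p • f 0 := by simpa using hhom 0
    have h3 : (p - 1) • f 0 = 0 := by
      have : f 0 + 0 = f 0 + (p - 1) • f 0 := by
        rw [add_zero]
        nth_rewrite 1 [h2]
        rw [← succ_nsmul']
        congr 1
        omega
      exact (add_left_cancel this).symm
    have h4 : f 0 ≤ (p - 1) • f 0 := by
      have : (p - 1) • f 0 = f 0 + (p - 2) • f 0 := by
        rw [← succ_nsmul']
        congr 1
        omega
      rw [this]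
      calc f 0 = f 0 + 0 := by simp
      _ ≤ f 0 + (p - 2) • f 0 := add_le_add_right (hnn _ h0 _) _
    exact le_antisymm (h3 ▸ h4) h0
  -- upper bound
  have hub : ∀ (m : ℕ) (x : X), f (m • x) ≤ m • f x := by
    intro m x
    induction m with
    | zero => simp [hf0]
    | succ k ih =>
      rw [succ_nsmul, succ_nsmul]
      calc f (k • x + x) ≤ f (k • x) + f x := hsub _ _
      _ ≤ k • f x + f x := add_le_add_left ih _
  -- p-power homogeneity
  have hpow : ∀ (k : ℕ) (x : X), f (p ^ k • x) = p ^ k • f x := by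
    intro k
    induction k with
    | zero => simp
    | succ n ih =>
      intro x
      have : p ^ (n + 1) • x = p ^ n • (p • x) := by
        rw [← mul_smul, ← pow_succ]
      rw [this, ih (p • x), hhom x, ← mul_smul, ← pow_succ]
  -- lower bound
  have hlb : ∀ (m : ℕ) (x : X), m • f x ≤ f (m • x) := by
    intro m x
    obtain ⟨k, hk⟩ : ∃ k, m ≤ p ^ k := ⟨m, le_trans (Nat.le_of_lt (Nat.lt_two_pow_self (n := m)))
      (Nat.pow_le_pow_left hp2 m)⟩
    have hsplit : p ^ k = m + (p ^ k - m) := by omega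
    have key : p ^ k • f x ≤ f (m • x) + (p ^ k - m) • f x := by
      calc p ^ k • f x = f (p ^ k • x) := (hpow k x).symm
      _ = f (m • x + (p ^ k - m) • x) := by rw [← add_nsmul, ← hsplit]
      _ ≤ f (m • x) + f ((p ^ k - m) • x) := hsub _ _
      _ ≤ f (m • x) + (p ^ k - m) • f x := add_le_add_right (hub _ _) _
    have key2 : m • f x + (p ^ k - m) • f x ≤ f (m • x) + (p ^ k - m) • f x := by
      rw [← add_nsmul, ← hsplit]; exact key
    exact le_of_add_le_add_right key2
  have hhomall : ∀ (m : ℕ) (x : X), f (m • x) = m • f x :=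
    fun m x => le_antisymm (hub m x) (hlb m x)
  refine ⟨?_, hhomall⟩
  -- finite subadditivity
  have hfs : ∀ {ι : Type} (s : Finset ι) (g : ι → X),
      f (∑ i ∈ s, g i) ≤ ∑ i ∈ s, f (g i) := by
    intro ι s g
    induction s using Finset.cons_induction with
    | empty => simp [hf0]
    | cons a t ha ih =>
      rw [Finset.sum_cons, Finset.sum_cons]
      calc f (_ + _) ≤ f _ + f _ := hsub _ _
      _ ≤ _ := add_le_add_right ih _
  intro n hn m hm xs x hx
  calc (∑ i, m i) • f x = f ((∑ i, m i) • x) := (hhomall _ _).symm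
  _ = f (∑ i, m i • xs i) := by rw [hx]
  _ ≤ ∑ i, f (m i • xs i) := hfs _ _
  _ = ∑ i, m i • f (xs i) := by simp [hhomall]
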